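/- Let $(K, |\cdot|_0)$ be a field with the trivial absolute value and $E$ a finite-dimensional $K$-vector space equipped with an ultrametric norm $\|\cdot\|$ compatible with $|\cdot|_0$ (i.e., $\|ax\| = |a|_0\|x\|$). Then the norm $\|\cdot\|$ takes only finitely many values on $E$. -/
import Mathlib


/-- Over a field `K` with the trivial absolute value, any ultrametric
norm on a finite-dimensional `K`-vector space `E` (compatible with the trivial absolute
value) takes only finitely many values. -/
theorem stmt4 (K : Type*) [Field K] (E : Type*) [AddCommGroup E] [Module K E]
    [FiniteDimensional K E] [DecidableEq K]
    (N : E → ℝ)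
    (hzero : ∀ x : E, N x = 0 ↔ x = 0)
    (hnonneg : ∀ x : E, 0 ≤ N x)
    (hsmul : ∀ (a : K) (x : E), N (a • x) = (if a = 0 then (0 : ℝ) else 1) * N x)
    (hultra : ∀ x y : E, N (x + y) ≤ max (N x) (N y)) :
    (Set.range N).Finite := by
  -- balls are submodules
  have hNsmul : ∀ (a : K) (x : E), N (a • x) ≤ N x := by
    intro a x
    rw [hsmul]
    by_cases h : a = 0
    · simp [h, hnonneg x]
    · simp [h]
  let B : ℝ → Submodule K E := fun r =>
    { carrier := {x | N x ≤ r ∨ x = 0}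
      add_mem' := by
        rintro x y (hx | rfl) (hy | rfl)
        · exact Or.inl ((hultra x y).trans (max_le hx hy))
        · simpa using Or.inl hx
        · simpa using Or.inl hy
        · simp
      zero_mem' := Or.inr rfl
      smul_mem' := by
        rintro a x (hx | rfl)
        · exact Or.inl ((hNsmul a x).trans hx)
        · simp }
  have hmono : ∀ {r s : ℝ}, r ≤ s → B r ≤ B s := by
    rintro r s hrs x (hx | rfl)
    · exact Or.inl (hx.trans hrs)
    · exact Or.inr rfl
  have hlt : ∀ {r s : ℝ}, r ∈ Set.range N → s ∈ Set.range N → r < s → B r < B s := by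
    rintro r s ⟨y, rfl⟩ ⟨x, rfl⟩ hrs
    refine lt_of_le_of_ne (hmono hrs.le) (fun h => ?_)
    have hx0 : x ≠ 0 := by
      intro h0
      rw [(hzero x).mpr h0] at hrs
      exact absurd hrs (not_lt.mpr (hnonneg y))
    have hxs : x ∈ B (N x) := Or.inl le_rfl
    rw [← h] at hxs
    rcases hxs with hx | hx
    · exact absurd hrs (not_lt.mpr hx)
    · exact hx0 hx
  have hinj : Set.InjOn (fun r => Module.finrank K (B r)) (Set.range N) := by
    intro r hr s hs h
    rcases lt_trichotomy r s with hrs | hrs | hrs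
    · exact absurd h (Nat.ne_of_lt (Submodule.finrank_lt_finrank_of_lt (hlt hr hs hrs)))
    · exact hrs
    · exact absurd h.symm (Nat.ne_of_lt (Submodule.finrank_lt_finrank_of_lt (hlt hs hr hrs)))
  have himg : ((fun r => Module.finrank K (B r)) '' Set.range N).Finite :=
    (Set.finite_Iic (Module.finrank K E)).subset (by
      rintro _ ⟨r, -, rfl⟩
      exact Submodule.finrank_le (B r))
  exact Set.Finite.of_finite_image himg hinj
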